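/- Let p be a prime. The exponent formula gives a perfect Cartier-duality pairing between the divided power additive group 𝔾_a^♯ and the formal additive group Ĝ_a over Spf ℤ_p: for a p-nilpotent ring A, the pairing (u,v) ↦ exp(uv) = Σ_{n≥0} u^n v^n/n! with u nilpotent in A and v ranging over divided-power points is well-defined (the series is finite) and biadditive: exp((u₁+u₂)v) = exp(u₁v)exp(u₂v) and exp(u(v₁+v₂)) = exp(uv₁)exp(uv₂). -/

import Mathlib

open Finset in
private lemma cauchy_aux {A : Type*} [CommRing A] (f g : ℕ → A) (K : ℕ)
    (h : ∀ i j : ℕ, K ≤ i + j → f i * g j = 0) :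
    ∑ n ∈ range K, ∑ i ∈ range (n + 1), f i * g (n - i)
      = (∑ i ∈ range K, f i) * (∑ j ∈ range K, g j) := by
  rw [Finset.sum_mul_sum, ← Finset.sum_product']
  have hR : ∑ p ∈ range K ×ˢ range K, f p.1 * g p.2
      = ∑ p ∈ (range K ×ˢ range K).filter (fun p => p.1 + p.2 < K), f p.1 * g p.2 := by
    refine (Finset.sum_subset (Finset.filter_subset _ _) ?_).symm
    intro p hps hp
    have hnlt : ¬ (p.1 + p.2 < K) := fun hlt => hp (Finset.mem_filter.mpr ⟨hps, hlt⟩)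
    exact h _ _ (le_of_not_gt hnlt)
  rw [hR, Finset.sum_sigma']
  refine Finset.sum_nbij' (fun x => (x.2, x.1 - x.2)) (fun p => ⟨p.1 + p.2, p.1⟩)
    ?_ ?_ ?_ ?_ ?_
  · rintro ⟨n, i⟩ hx
    simp only [Finset.mem_sigma, Finset.mem_range] at hx
    have hin : i ≤ n := Nat.lt_succ_iff.mp hx.2
    simp only [Finset.mem_filter, Finset.mem_product, Finset.mem_range]
    refine ⟨⟨lt_of_le_of_lt hin hx.1, lt_of_le_of_lt (Nat.sub_le _ _) hx.1⟩, ?_⟩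
    simpa [Nat.add_sub_cancel' hin] using hx.1
  · rintro ⟨a, b⟩ hp
    simp only [Finset.mem_filter, Finset.mem_product, Finset.mem_range] at hp
    simp only [Finset.mem_sigma, Finset.mem_range]
    exact ⟨hp.2, Nat.lt_succ_iff.mpr (Nat.le_add_right _ _)⟩
  · rintro ⟨n, i⟩ hx
    simp only [Finset.mem_sigma, Finset.mem_range] at hx
    have hin : i ≤ n := Nat.lt_succ_iff.mp hx.2
    simp [Nat.add_sub_cancel' hin]
  · rintro ⟨a, b⟩ _
    simp
  · rintro ⟨n, i⟩ _
    rfl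

private lemma trunc_aux {A : Type*} [CommRing A] (u : A) (v : ℕ → A) {N K : ℕ}
    (hN : u ^ N = 0) (hNK : N ≤ K) :
    ∑ n ∈ Finset.range N, u ^ n * v n = ∑ n ∈ Finset.range K, u ^ n * v n := by
  refine Finset.sum_subset (Finset.range_subset_range.mpr hNK) ?_
  intro n _ hn
  rw [Finset.mem_range, not_lt] at hn
  rw [← Nat.add_sub_cancel' hn, pow_add, hN, zero_mul, zero_mul]

/-- over a p-nilpotent ring A, the pairing
exp(uv) = Σ_n uⁿ·v^[n] (u nilpotent, v a divided-power point, i.e. a system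
v^[n] with v^[0] = 1 and v^[m]·v^[n] = C(m+n,n)·v^[m+n]) is a finite sum
independent of the truncation point, takes values in units, and is
biadditive: exp((u₁+u₂)v) = exp(u₁v)·exp(u₂v) and
exp(u(v+w)) = exp(uv)·exp(uw), where (v+w)^[n] = Σ_i v^[i]·w^[n−i]. -/
theorem stmt18 (p : ℕ) (hp : p.Prime) (A : Type*) [CommRing A]
    (hpA : IsNilpotent (p : A))
    (u u₁ u₂ : A) (hu : IsNilpotent u) (hu₁ : IsNilpotent u₁) (hu₂ : IsNilpotent u₂)
    (v w : ℕ → A) (hv0 : v 0 = 1) (hw0 : w 0 = 1)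
    (hv : ∀ m n : ℕ, v m * v n = ((m + n).choose n : A) * v (m + n))
    (hw : ∀ m n : ℕ, w m * w n = ((m + n).choose n : A) * w (m + n)) :
    (∀ N M : ℕ, u ^ N = 0 → u ^ M = 0 →
      ∑ n ∈ Finset.range N, u ^ n * v n = ∑ n ∈ Finset.range M, u ^ n * v n) ∧
    (∀ N : ℕ, u ^ N = 0 → IsUnit (∑ n ∈ Finset.range N, u ^ n * v n)) ∧
    (∀ N : ℕ, u₁ ^ N = 0 → u₂ ^ N = 0 →
      ∑ n ∈ Finset.range (2 * N), (u₁ + u₂) ^ n * v n =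
        (∑ n ∈ Finset.range N, u₁ ^ n * v n) *
          (∑ n ∈ Finset.range N, u₂ ^ n * v n)) ∧
    (∀ N : ℕ, u ^ N = 0 →
      ∑ n ∈ Finset.range N,
          u ^ n * (∑ i ∈ Finset.range (n + 1), v i * w (n - i)) =
        (∑ n ∈ Finset.range N, u ^ n * v n) *
          (∑ n ∈ Finset.range N, u ^ n * w n)) := by
  refine ⟨?_, ?_, ?_, ?_⟩
  · -- independence of truncation
    intro N M hN hM
    rcases le_total N M with hNM | hMN
    · exact trunc_aux u v hN hNM
    · exact (trunc_aux u v hM hMN).symm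
  · -- unit
    intro N hN
    rw [trunc_aux u v hN (Nat.le_succ N), Finset.sum_range_succ']
    simp only [pow_zero, one_mul, hv0]
    refine IsNilpotent.isUnit_add_one ?_
    refine isNilpotent_sum (fun i _ => ?_)
    exact (Commute.all _ _).isNilpotent_mul_right (hu.pow_succ i)
  · -- additivity in u
    intro N hN₁ hN₂
    have key := cauchy_aux (fun i => u₁ ^ i * v i) (fun j => u₂ ^ j * v j) (2 * N)
      (fun i j hij => by
        have : N ≤ i ∨ N ≤ j := by omega
        rcases this with hi | hj
        · rw [← Nat.add_sub_cancel' hi, pow_add, hN₁]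
          ring
        · rw [← Nat.add_sub_cancel' hj, pow_add, hN₂]
          ring)
    rw [trunc_aux u₁ v hN₁ (show N ≤ 2 * N by omega),
      trunc_aux u₂ v hN₂ (show N ≤ 2 * N by omega), ← key]
    refine Finset.sum_congr rfl (fun n _ => ?_)
    rw [add_pow, Finset.sum_mul]
    refine Finset.sum_congr rfl (fun i hi => ?_)
    have hin : i ≤ n := Nat.lt_succ_iff.mp (Finset.mem_range.mp hi)
    have hvv : v i * v (n - i) = (n.choose (n - i) : A) * v n := by
      rw [hv i (n - i), Nat.add_sub_cancel' hin]
    rw [Nat.choose_symm hin] at hvv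
    calc u₁ ^ i * u₂ ^ (n - i) * (n.choose i : A) * v n
        = u₁ ^ i * u₂ ^ (n - i) * ((n.choose i : A) * v n) := by ring
      _ = u₁ ^ i * u₂ ^ (n - i) * (v i * v (n - i)) := by rw [hvv]
      _ = u₁ ^ i * v i * (u₂ ^ (n - i) * v (n - i)) := by ring
  · -- additivity in v
    intro N hN
    have key := cauchy_aux (fun i => u ^ i * v i) (fun j => u ^ j * w j) N
      (fun i j hij => by
        have : u ^ i * u ^ j = 0 := by
          rw [← pow_add, ← Nat.add_sub_cancel' hij, pow_add, hN, zero_mul]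
        calc u ^ i * v i * (u ^ j * w j) = u ^ i * u ^ j * (v i * w j) := by ring
          _ = 0 := by rw [this, zero_mul])
    rw [← key]
    refine Finset.sum_congr rfl (fun n _ => ?_)
    rw [Finset.mul_sum]
    refine Finset.sum_congr rfl (fun i hi => ?_)
    have hin : i ≤ n := Nat.lt_succ_iff.mp (Finset.mem_range.mp hi)
    rw [show u ^ n = u ^ i * u ^ (n - i) by rw [← pow_add, Nat.add_sub_cancel' hin]]
    ring
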